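/- arXiv:1510.06094 — 2 statements merged into one kernel-verified Lean document; each statement's English description precedes it below -/
import Mathlib

section
/- Let k = 2K+1 ≥ 5 be an odd integer and let i be an integer with 0 ≤ i ≤ k-2. Then for every fixed real number x, the second derivative with respect to y of the function y ↦ G_k^{(i)}(x, y) equals (k-2-i)(k-3-i) · G_{k-2}^{(i)}(x, y) - 2i(k-2-i) · F_{k-2}^{(k-3-i)}(x, y) + i(i-1) · G_{k-2}^{(i-2)}(x, y), where any term whose scalar coefficient vanishes (in particular those with superscript i-2 < 0 when i ≤ 1, or with superscript k-3-i out of range) is interpreted as zero. -/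
/-- `F_k^{(i)}(x,y)` for `k = 2K+1`:
`∑_{s=1}^{K-1} ((-2/(2s-1)) · ∑_{n=0}^{k-2s} C(i,k-2s-n)·C(n+2s-2,n)·B_n) · x^{2K-2s} y^{2s-1}`. -/
noncomputable def Fpoly (K i : ℕ) (x y : ℝ) : ℝ :=
  ∑ s ∈ Finset.Icc 1 (K - 1),
    (((-2 / (2 * (s : ℚ) - 1)) * ∑ n ∈ Finset.range (2 * K + 1 - 2 * s + 1),
        (Nat.choose i (2 * K + 1 - 2 * s - n) : ℚ)
          * (Nat.choose (n + 2 * s - 2) n : ℚ) * bernoulli n : ℚ) : ℝ)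
      * x ^ (2 * K - 2 * s) * y ^ (2 * s - 1)

/-- `G_k^{(i)}(x,y)` for `k = 2K+1`:
`∑_{s=1}^{K-1} ((2/(2s-1)) · ∑_{n=0}^{k-2s} C(k-2-i,k-2s-n)·C(n+2s-2,n)·B_n) · x^{2K-2s} y^{2s-1}`. -/
noncomputable def Gpoly (K i : ℕ) (x y : ℝ) : ℝ :=
  ∑ s ∈ Finset.Icc 1 (K - 1),
    (((2 / (2 * (s : ℚ) - 1)) * ∑ n ∈ Finset.range (2 * K + 1 - 2 * s + 1),
        (Nat.choose (2 * K + 1 - 2 - i) (2 * K + 1 - 2 * s - n) : ℚ)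
          * (Nat.choose (n + 2 * s - 2) n : ℚ) * bernoulli n : ℚ) : ℝ)
      * x ^ (2 * K - 2 * s) * y ^ (2 * s - 1)


private lemma b1 (a m : ℕ) :
    (a : ℝ) * ((a - 1).choose m : ℝ) = ((a : ℝ) - m) * (a.choose m : ℝ) := by
  cases a with
  | zero => cases m <;> simp
  | succ b =>
    by_cases h : m ≤ b + 1
    · have hh := congrArg (Nat.cast (R := ℝ)) (Nat.choose_mul_succ_eq b m)
      push_cast [Nat.cast_sub h] at hh
      simp only [Nat.add_sub_cancel]
      push_cast
      linarith [hh]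
    · have h1 : (b + 1).choose m = 0 := Nat.choose_eq_zero_of_lt (by omega)
      have h2 : b.choose m = 0 := Nat.choose_eq_zero_of_lt (by omega)
      simp [Nat.add_sub_cancel, h1, h2]

private lemma b2 (a m : ℕ) :
    (a : ℝ) * ((a : ℝ) - 1) * ((a - 2).choose m : ℝ)
      = ((a : ℝ) - m) * ((a : ℝ) - m - 1) * (a.choose m : ℝ) := by
  cases a with
  | zero => cases m <;> simp <;> ring
  | succ b =>
    have h1 := b1 b m
    have h2 := b1 (b + 1) m
    have e : (b + 1) - 2 = b - 1 := by omega
    rw [e]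
    push_cast at h1 h2 ⊢
    linear_combination ((b : ℝ) + 1) * h1 + ((b : ℝ) - m) * h2

private lemma nb (s n : ℕ) (hs : 1 ≤ s) :
    (2 * (s : ℝ)) * (2 * (s : ℝ) - 1) * ((n + 2 * s).choose n : ℝ)
      = ((n : ℝ) + 2 * s) * ((n : ℝ) + 2 * s - 1) * ((n + 2 * s - 2).choose n : ℝ) := by
  obtain ⟨t, rfl⟩ : ∃ t, s = t + 1 := ⟨s - 1, by omega⟩
  simp only [show n + 2 * (t + 1) = n + 2 * t + 2 from by ring,
    show n + 2 * (t + 1) - 2 = n + 2 * t from by omega]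
  have e1 : (n + 2 * t + 2).choose n = (n + 2 * t + 2).choose (2 * t + 2) := by
    have := Nat.choose_symm (show 2 * t + 2 ≤ n + (2 * t + 2) by omega)
    simpa [Nat.add_sub_cancel, show n + (2*t+2) = n + 2*t + 2 from by ring] using this
  have e2 : (n + 2 * t).choose (2 * t) = (n + 2 * t).choose n := by
    have := Nat.choose_symm (show 2 * t ≤ n + 2 * t by omega)
    simpa [Nat.add_sub_cancel] using this.symm
  have s1 := congrArg (Nat.cast (R := ℝ)) (Nat.add_one_mul_choose_eq (n + 2 * t + 1) (2 * t + 1))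
  have s2 := congrArg (Nat.cast (R := ℝ)) (Nat.add_one_mul_choose_eq (n + 2 * t) (2 * t))
  have e1c := congrArg (Nat.cast (R := ℝ)) e1
  have e2c := congrArg (Nat.cast (R := ℝ)) e2
  push_cast [Nat.succ_eq_add_one] at s1 s2 e1c e2c
  push_cast
  linear_combination (2*(t:ℝ)+2)*(2*(t:ℝ)+1)*e1c - (2*(t:ℝ)+1)*s1 - ((n:ℝ)+2*(t:ℝ)+2)*s2
    + ((n:ℝ)+2*(t:ℝ)+2)*((n:ℝ)+2*(t:ℝ)+1)*e2c

private lemma mainlem (a i s n m A2 A1 A0 : ℕ) (hs : 1 ≤ s)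
    (hm : n + 2 * s + m = a + i) (hA2 : A2 = a - 2) (hA1 : A1 = a - 1)
    (hw : (i : ℝ) * ((i : ℝ) - 1) * (A0.choose m : ℝ)
        = (i : ℝ) * ((i : ℝ) - 1) * (a.choose m : ℝ)) :
    (2 * (s : ℝ) - 1) * (2 * (s : ℝ)) * ((n + 2 * s).choose n : ℝ) * (a.choose m : ℝ)
      = ((a : ℝ) * ((a : ℝ) - 1) * (A2.choose m : ℝ)
          + 2 * (i : ℝ) * (a : ℝ) * (A1.choose m : ℝ)
          + (i : ℝ) * ((i : ℝ) - 1) * (A0.choose m : ℝ)) * ((n + 2 * s - 2).choose n : ℝ) := by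
  subst hA2 hA1
  have h1 := nb s n hs
  have h2 := b1 a m
  have h3 := b2 a m
  have hc : (n : ℝ) + 2 * (s : ℝ) + (m : ℝ) = (a : ℝ) + (i : ℝ) := by exact_mod_cast hm
  linear_combination ((a.choose m : ℕ) : ℝ) * h1
    - (((n + 2 * s - 2).choose n : ℕ) : ℝ) * h3
    - 2 * (i : ℝ) * (((n + 2 * s - 2).choose n : ℕ) : ℝ) * h2
    - (((n + 2 * s - 2).choose n : ℕ) : ℝ) * hw
    + ((a.choose m : ℕ) : ℝ) * (((n + 2 * s - 2).choose n : ℕ) : ℝ)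
        * ((n : ℝ) + 2 * (s : ℝ) + (a : ℝ) + (i : ℝ) - (m : ℝ) - 1) * hc

private lemma deriv2_sum (F : Finset ℕ) (c : ℕ → ℝ) (e : ℕ → ℕ) (y : ℝ) :
    deriv (deriv (fun t : ℝ => ∑ s ∈ F, c s * t ^ e s)) y
      = ∑ s ∈ F, c s * ((e s : ℝ) * (((e s - 1 : ℕ) : ℝ) * y ^ (e s - 1 - 1))) := by
  have h1 : deriv (fun t : ℝ => ∑ s ∈ F, c s * t ^ e s)
      = fun t => ∑ s ∈ F, c s * ((e s : ℝ) * t ^ (e s - 1)) := by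
    funext t
    exact (HasDerivAt.fun_sum fun s _ => (hasDerivAt_pow (e s) t).const_mul (c s)).deriv
  rw [h1]
  exact (HasDerivAt.fun_sum fun s _ =>
    ((hasDerivAt_pow (e s - 1) y).const_mul ((e s : ℝ))).const_mul (c s)).deriv

/-- **Second derivative of `G` in `y`.**
For odd `k = 2K+1 ≥ 5` and `0 ≤ i ≤ k-2`, for every fixed real `x`,
`∂²/∂y² G_k^{(i)}(x,y) = (k-2-i)(k-3-i)·G_{k-2}^{(i)}(x,y)
  - 2i(k-2-i)·F_{k-2}^{(k-3-i)}(x,y) + i(i-1)·G_{k-2}^{(i-2)}(x,y)`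
(note `k-2 = 2(K-1)+1`; superscripts are truncated natural subtractions, which is
harmless since the corresponding scalar coefficients then vanish). -/
theorem Gpoly_second_deriv (K i : ℕ) (hK : 2 ≤ K) (hi : i ≤ 2 * K + 1 - 2) :
    ∀ x y : ℝ, deriv (deriv (fun t : ℝ => Gpoly K i x t)) y =
      ((2 * K + 1 : ℝ) - 2 - (i : ℝ)) * ((2 * K + 1 : ℝ) - 3 - (i : ℝ))
          * Gpoly (K - 1) i x y
        - 2 * (i : ℝ) * ((2 * K + 1 : ℝ) - 2 - (i : ℝ))
          * Fpoly (K - 1) (2 * K + 1 - 3 - i) x y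
        + (i : ℝ) * ((i : ℝ) - 1) * Gpoly (K - 1) (i - 2) x y := by
  intro x y
  have hi' : i ≤ 2 * K - 1 := by omega
  simp only [Gpoly, Fpoly]
  rw [deriv2_sum]
  rw [show Finset.Icc 1 (K - 1) = insert 1 (Finset.Icc 2 (K - 1)) from by
    ext a; simp only [Finset.mem_Icc, Finset.mem_insert]; omega]
  rw [Finset.sum_insert (by simp [Finset.mem_Icc])]
  simp only [show (2 * 1 - 1 - 1 : ℕ) = 0 from by norm_num, Nat.cast_zero, zero_mul, mul_zero,
    zero_add]
  rw [show Finset.Icc 2 (K - 1) = (Finset.Icc 1 (K - 2)).map (addRightEmbedding 1) from by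
    rw [Finset.map_add_right_Icc]; congr 1 <;> omega, Finset.sum_map]
  simp only [addRightEmbedding_apply]
  simp only [show K - 1 - 1 = K - 2 from by omega]
  simp only [Finset.mul_sum]
  rw [← Finset.sum_sub_distrib, ← Finset.sum_add_distrib]
  refine Finset.sum_congr rfl fun s hs => ?_
  rw [Finset.mem_Icc] at hs
  obtain ⟨hs1, hs2⟩ := hs
  simp only [show 2 * K - 2 * (s + 1) = 2 * (K - 1) - 2 * s from by omega,
    show 2 * (s + 1) - 1 - 1 - 1 = 2 * s - 1 from by omega,
    show 2 * (s + 1) - 1 - 1 = 2 * s from by omega,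
    show 2 * (s + 1) - 1 = 2 * s + 1 from by omega,
    show 2 * K + 1 - 2 * (s + 1) + 1 = 2 * (K - 1) + 1 - 2 * s + 1 from by omega,
    show ∀ n : ℕ, 2 * K + 1 - 2 * (s + 1) - n = 2 * (K - 1) + 1 - 2 * s - n from
      fun n => by omega,
    show ∀ n : ℕ, n + 2 * (s + 1) - 2 = n + 2 * s from fun n => by omega,
    show 2 * K + 1 - 2 - i = 2 * K - 1 - i from by omega,
    show 2 * (K - 1) + 1 - 2 - i = 2 * K - 1 - i - 2 from by omega,
    show 2 * K + 1 - 3 - i = 2 * K - 1 - i - 1 from by omega]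
  rw [show (2 * (K : ℝ) + 1 - 2 - (i : ℝ)) = ((2 * K - 1 - i : ℕ) : ℝ) from by
      rw [Nat.cast_sub hi', Nat.cast_sub (by omega : 1 ≤ 2 * K)]; push_cast; ring,
    show (2 * (K : ℝ) + 1 - 3 - (i : ℝ)) = ((2 * K - 1 - i : ℕ) : ℝ) - 1 from by
      rw [Nat.cast_sub hi', Nat.cast_sub (by omega : 1 ≤ 2 * K)]; push_cast; ring]
  push_cast
  simp only [Finset.mul_sum, Finset.sum_mul]
  rw [← Finset.sum_sub_distrib, ← Finset.sum_add_distrib]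
  refine Finset.sum_congr rfl fun n hn => ?_
  rw [Finset.mem_range] at hn
  have hd1 : (2 * ((s : ℝ) + 1) - 1) ≠ 0 := by
    have : (0 : ℝ) ≤ (s : ℝ) := Nat.cast_nonneg s
    intro h; nlinarith
  have hd2 : (2 * (s : ℝ) - 1) ≠ 0 := by
    have : (1 : ℝ) ≤ (s : ℝ) := by exact_mod_cast hs1
    intro h; nlinarith
  have hw : (i : ℝ) * ((i : ℝ) - 1)
        * (((2 * (K - 1) + 1 - 2 - (i - 2)).choose (2 * (K - 1) + 1 - 2 * s - n) : ℕ) : ℝ)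
      = (i : ℝ) * ((i : ℝ) - 1)
        * (((2 * K - 1 - i).choose (2 * (K - 1) + 1 - 2 * s - n) : ℕ) : ℝ) := by
    rcases Nat.lt_or_ge i 2 with h | h
    · interval_cases i <;> norm_num
    · rw [show 2 * (K - 1) + 1 - 2 - (i - 2) = 2 * K - 1 - i from by omega]
  have hmain := mainlem (2 * K - 1 - i) i s n (2 * (K - 1) + 1 - 2 * s - n)
    (2 * K - 1 - i - 2) (2 * K - 1 - i - 1) (2 * (K - 1) + 1 - 2 - (i - 2)) hs1
    (by omega) rfl rfl hw
  push_cast [Nat.cast_sub hi', Nat.cast_sub (show 1 ≤ 2 * K from by omega)] at hmain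
  field_simp
  push_cast [Nat.cast_sub hi', Nat.cast_sub (show 1 ≤ 2 * K from by omega)]
  linear_combination ((bernoulli n : ℝ) * x ^ (2 * (K - 1) - 2 * s) * y ^ (2 * s - 1)
    * (2 * (s : ℝ) + 1)) * hmain
end

section
/- For every integer k ≥ 4 and every integer i with 1 ≤ i ≤ k-3, one has A_k^{(i)} = 0, where A_k^{(i)} := ∑_{s=1}^{⌊k/2⌋} (-2/(2s-1)) · ∑_{n=0}^{k-2s} C(i, k-2s-n) · C(n+2s-2, n) · B_n. -/
section AtermAux
open Finset

lemma full_sum (m : ℕ) (hm : 2 ≤ m) :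
    ∑ j ∈ range (m+1), (m.choose j : ℚ) * bernoulli j = bernoulli m := by
  rw [Finset.sum_range_succ, sum_bernoulli]
  have h1 : m ≠ 1 := by omega
  simp [h1]

lemma alt_sum (m : ℕ) (hm : 2 ≤ m) :
    ∑ j ∈ range (m+1), (-1:ℚ)^j * (m.choose j : ℚ) * bernoulli j = m + bernoulli m := by
  have key : ∑ j ∈ range (m+1), (-1:ℚ)^j * (m.choose j : ℚ) * bernoulli j
       = ∑ j ∈ range (m+1), (m.choose j : ℚ) * bernoulli' j := by
    refine Finset.sum_congr rfl fun j _ => ?_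
    rw [bernoulli'_eq_bernoulli]; ring
  rw [key, Finset.sum_range_succ, sum_bernoulli', bernoulli_eq_bernoulli'_of_ne_one (by omega)]
  simp

lemma odd_sum (m : ℕ) (hm : 2 ≤ m) :
    ∑ j ∈ range (m+1), (if Odd j then (m.choose j : ℚ) * bernoulli j else 0)
      = -(m:ℚ)/2 := by
  have key : ∀ j : ℕ, (if Odd j then (m.choose j : ℚ) * bernoulli j else 0)
      = ((m.choose j : ℚ) * bernoulli j - (-1:ℚ)^j * (m.choose j) * bernoulli j)/2 := by
    intro j
    rcases Nat.even_or_odd j with h | h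
    · rw [if_neg (by simpa using h), h.neg_one_pow]; ring
    · rw [if_pos h, h.neg_one_pow]; ring
  simp_rw [key]
  rw [← Finset.sum_div, Finset.sum_sub_distrib, full_sum m hm, alt_sum m hm]
  ring

lemma even_sum (m : ℕ) (hm : 2 ≤ m) :
    ∑ j ∈ range (m+1), (if Even j then (m.choose j : ℚ) * bernoulli j else 0)
      = bernoulli m + (m:ℚ)/2 := by
  have key : ∀ j : ℕ, (if Even j then (m.choose j : ℚ) * bernoulli j else 0)
      = (m.choose j : ℚ) * bernoulli j - (if Odd j then (m.choose j : ℚ) * bernoulli j else 0) := by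
    intro j
    rcases Nat.even_or_odd j with h | h
    · rw [if_pos h, if_neg (by simpa using h)]; ring
    · rw [if_neg (by simpa using h), if_pos h]; ring
  simp_rw [key]
  rw [Finset.sum_sub_distrib, full_sum m hm, odd_sum m hm]
  ring

lemma refl_odd (m : ℕ) (hm : 2 ≤ m) :
    ∑ j ∈ range (m+1), (if Odd j then (m.choose j : ℚ) * bernoulli (m - j) else 0)
      = (-1:ℚ)^(m-1) * m / 2 := by
  have hrefl := Finset.sum_range_reflect
    (fun j => if Odd j then (m.choose j : ℚ) * bernoulli (m - j) else 0) (m+1)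
  rw [← hrefl]
  rcases Nat.even_or_odd m with hme | hmo
  · have : ∀ j ∈ range (m+1),
        (if Odd (m + 1 - 1 - j) then (m.choose (m+1-1-j) : ℚ) * bernoulli (m - (m+1-1-j)) else 0)
        = (if Odd j then (m.choose j : ℚ) * bernoulli j else 0) := by
      intro j hj
      rw [Finset.mem_range] at hj
      have hjm : j ≤ m := by omega
      have h1 : m + 1 - 1 - j = m - j := by omega
      have h2 : m - (m - j) = j := by omega
      have h3 : Odd (m - j) ↔ Odd j := by
        rw [Nat.odd_iff, Nat.odd_iff]
        rcases hme with ⟨t, ht⟩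
        omega
      rw [h1, h2, Nat.choose_symm hjm]
      by_cases h : Odd j
      · rw [if_pos (h3.mpr h), if_pos h]
      · rw [if_neg (fun hh => h (h3.mp hh)), if_neg h]
    rw [Finset.sum_congr rfl this, odd_sum m hm]
    have : (-1:ℚ)^(m-1) = -1 := by
      rcases hme with ⟨t, ht⟩
      have : m - 1 = 2*(t-1) + 1 := by omega
      rw [this, pow_succ, pow_mul]; norm_num
    rw [this]; ring
  · have hm0 : bernoulli m = 0 := by
      have := bernoulli'_eq_zero_of_odd hmo (by omega)
      rw [bernoulli_eq_bernoulli'_of_ne_one (by omega), this]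
    have : ∀ j ∈ range (m+1),
        (if Odd (m + 1 - 1 - j) then (m.choose (m+1-1-j) : ℚ) * bernoulli (m - (m+1-1-j)) else 0)
        = (if Even j then (m.choose j : ℚ) * bernoulli j else 0) := by
      intro j hj
      rw [Finset.mem_range] at hj
      have hjm : j ≤ m := by omega
      have h1 : m + 1 - 1 - j = m - j := by omega
      have h2 : m - (m - j) = j := by omega
      have h3 : Odd (m - j) ↔ Even j := by
        rw [Nat.odd_iff, Nat.even_iff]
        rcases hmo with ⟨t, ht⟩
        omega
      rw [h1, h2, Nat.choose_symm hjm]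
      by_cases h : Even j
      · rw [if_pos (h3.mpr h), if_pos h]
      · rw [if_neg (fun hh => h (h3.mp hh)), if_neg h]
    rw [Finset.sum_congr rfl this, even_sum m hm, hm0]
    have : (-1:ℚ)^(m-1) = 1 := by
      rcases hmo with ⟨t, ht⟩
      have : m - 1 = 2*t := by omega
      rw [this, pow_mul]; norm_num
    rw [this]; ring

lemma refl_oddN (m N : ℕ) (hm : 2 ≤ m) (hN : m < N) :
    ∑ j ∈ range N, (if Odd j then (m.choose j : ℚ) * bernoulli (m - j) else 0)
      = (-1:ℚ)^(m-1) * m / 2 := by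
  rw [← refl_odd m hm]
  symm
  apply Finset.sum_subset
  · intro x hx; rw [Finset.mem_range] at *; omega
  · intro x hx hnx
    rw [Finset.mem_range] at hx hnx
    have : m.choose x = 0 := Nat.choose_eq_zero_of_lt (by omega)
    simp [this]


lemma reindex_odd (k : ℕ) (F : ℕ → ℚ) :
    ∑ s ∈ Icc 1 (k/2), F (2*s - 1) = ∑ j ∈ range k, (if Odd j then F j else 0) := by
  rw [← Finset.sum_filter]
  apply Finset.sum_bij' (fun s _ => 2*s - 1) (fun j _ => (j+1)/2) <;>
    simp only [Finset.mem_filter, Finset.mem_range, Finset.mem_Icc, Nat.odd_iff] <;>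
    intros <;> first | rfl | omega | (constructor <;> omega)


lemma term_one (k s : ℕ) (hk : 4 ≤ k) (hs1 : 1 ≤ s) (hs2 : 2*s ≤ k) :
    (-2 / (2 * (s : ℚ) - 1)) * ∑ n ∈ Finset.range (k - 2 * s + 1),
      (Nat.choose 1 (k - 2 * s - n) : ℚ) * (Nat.choose (n + 2 * s - 2) n : ℚ) * bernoulli n
    = (-2/((k:ℚ)-1)) * (((k-1).choose (2*s-1) : ℚ) * bernoulli ((k-1) - (2*s-1)))
    + (-2/((k:ℚ)-2)) * (((k-2).choose (2*s-1) : ℚ) * bernoulli ((k-2) - (2*s-1))) := by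
  have hs1' : (1:ℚ) ≤ s := by exact_mod_cast hs1
  have hden : 2*(s:ℚ) - 1 ≠ 0 := by nlinarith
  have hk4 : (4:ℚ) ≤ k := by exact_mod_cast hk
  have hk1 : (k:ℚ) - 1 ≠ 0 := by nlinarith
  have hk2 : (k:ℚ) - 2 ≠ 0 := by nlinarith
  rcases Nat.eq_or_lt_of_le hs2 with he | hlt
  · -- 2*s = k
    have hm : k - 2*s = 0 := by omega
    have h1 : (k-1).choose (2*s-1) = 1 := by
      rw [show 2*s-1 = k-1 from by omega]; exact Nat.choose_self _
    have h2 : (k-2).choose (2*s-1) = 0 := Nat.choose_eq_zero_of_lt (by omega)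
    have h3 : (k-1) - (2*s-1) = 0 := by omega
    rw [hm, h1, h2, h3, Finset.sum_range_one]
    have hcast : 2*(s:ℚ) - 1 = (k:ℚ) - 1 := by
      have : ((2*s : ℕ):ℚ) = (k:ℚ) := by exact_mod_cast congrArg (Nat.cast (R := ℚ)) he
      push_cast at this
      linarith
    rw [hcast]
    norm_num
  · -- 2*s < k, m := k - 2*s ≥ 1
    set m := k - 2*s with hm
    have hm1 : 1 ≤ m := by omega
    have hsplit : k - 2*s + 1 = (m-1) + 1 + 1 := by omega
    rw [hsplit, Finset.sum_range_succ, Finset.sum_range_succ]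
    have hzero : ∀ n ∈ Finset.range (m-1),
        (Nat.choose 1 (k - 2 * s - n) : ℚ) * (Nat.choose (n + 2 * s - 2) n : ℚ) * bernoulli n = 0 := by
      intro n hn
      rw [Finset.mem_range] at hn
      have : Nat.choose 1 (k - 2*s - n) = 0 := Nat.choose_eq_zero_of_lt (by omega)
      rw [this]; push_cast; ring
    rw [Finset.sum_eq_zero hzero, zero_add]
    have e1 : k - 2*s - (m-1) = 1 := by omega
    have e2 : k - 2*s - (m-1+1) = 0 := by omega
    have e3 : m - 1 + 2*s - 2 = k - 3 := by omega
    have e4 : m - 1 + 1 + 2*s - 2 = k - 2 := by omega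
    have e5 : m - 1 + 1 = m := by omega
    rw [e1, e2, e3, e4, e5]
    simp only [Nat.choose_one_right, Nat.choose_zero_right, Nat.choose_self, Nat.cast_one, one_mul]
    have i1 : (k-1) * (k-2).choose m = (k-1).choose (2*s-1) * (2*s-1) := by
      have h := Nat.add_one_mul_choose_eq (k-2) (2*s-2)
      rw [show k-2+1 = k-1 from by omega, show 2*s-2+1 = 2*s-1 from by omega,
        show (k-2).choose (2*s-2) = (k-2).choose m from by
          rw [show m = (k-2) - (2*s-2) from by omega]
          exact (Nat.choose_symm (by omega)).symm] at h
      exact h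
    have i2 : (k-2) * (k-3).choose (m-1) = (k-2).choose (2*s-1) * (2*s-1) := by
      have h := Nat.add_one_mul_choose_eq (k-3) (2*s-2)
      rw [show k-3+1 = k-2 from by omega, show 2*s-2+1 = 2*s-1 from by omega,
        show (k-3).choose (2*s-2) = (k-3).choose (m-1) from by
          rw [show m - 1 = (k-3) - (2*s-2) from by omega]
          exact (Nat.choose_symm (by omega)).symm] at h
      exact h
    have b1 : (k-1) - (2*s-1) = m := by omega
    have b2 : (k-2) - (2*s-1) = m - 1 := by omega
    rw [b1, b2]
    have c1 : ((k:ℚ) - 1) * ((k-2).choose m : ℚ) = ((k-1).choose (2*s-1) : ℚ) * (2*(s:ℚ) - 1) := by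
      have h := congrArg (Nat.cast (R := ℚ)) i1
      push_cast [Nat.cast_sub (show 1 ≤ k by omega), Nat.cast_sub (show 1 ≤ 2*s by omega)] at h
      linarith [h]
    have c2 : ((k:ℚ) - 2) * ((k-3).choose (m-1) : ℚ) = ((k-2).choose (2*s-1) : ℚ) * (2*(s:ℚ) - 1) := by
      have h := congrArg (Nat.cast (R := ℚ)) i2
      push_cast [Nat.cast_sub (show 2 ≤ k by omega), Nat.cast_sub (show 1 ≤ 2*s by omega)] at h
      linarith [h]
    have q1 : ((k-2).choose m : ℚ) / (2*(s:ℚ)-1) = ((k-1).choose (2*s-1) : ℚ)/((k:ℚ)-1) := by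
      rw [div_eq_div_iff hden hk1]; linear_combination c1
    have q2 : ((k-3).choose (m-1) : ℚ) / (2*(s:ℚ)-1) = ((k-2).choose (2*s-1) : ℚ)/((k:ℚ)-2) := by
      rw [div_eq_div_iff hden hk2]; linear_combination c2
    have final : -2 * ((((k-3).choose (m-1) : ℚ))/(2*(s:ℚ)-1) * bernoulli (m-1))
        + -2 * ((((k-2).choose m : ℚ))/(2*(s:ℚ)-1) * bernoulli m)
        = -2/((k:ℚ)-1) * (((k-1).choose (2*s-1) : ℚ) * bernoulli m)
        + -2/((k:ℚ)-2) * (((k-2).choose (2*s-1) : ℚ) * bernoulli (m-1)) := by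
      rw [q1, q2]; ring
    refine Eq.trans ?_ final
    ring

end AtermAux

/-- `A_k^{(i)} = ∑_{s=1}^{⌊k/2⌋} (-2/(2s-1)) · ∑_{n=0}^{k-2s} C(i,k-2s-n)·C(n+2s-2,n)·B_n`. -/
noncomputable def Aterm (k i : ℕ) : ℚ :=
  ∑ s ∈ Finset.Icc 1 (k / 2),
    (-2 / (2 * (s : ℚ) - 1)) * ∑ n ∈ Finset.range (k - 2 * s + 1),
      (Nat.choose i (k - 2 * s - n) : ℚ) * (Nat.choose (n + 2 * s - 2) n : ℚ) * bernoulli n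

open Finset in
lemma Aterm_one (k : ℕ) (hk : 4 ≤ k) : Aterm k 1 = 0 := by
  unfold Aterm
  have step : ∑ s ∈ Finset.Icc 1 (k / 2),
      (-2 / (2 * (s : ℚ) - 1)) * ∑ n ∈ Finset.range (k - 2 * s + 1),
        (Nat.choose 1 (k - 2 * s - n) : ℚ) * (Nat.choose (n + 2 * s - 2) n : ℚ) * bernoulli n
    = ∑ s ∈ Finset.Icc 1 (k / 2),
      ((-2/((k:ℚ)-1)) * (((k-1).choose (2*s-1) : ℚ) * bernoulli ((k-1) - (2*s-1)))
       + (-2/((k:ℚ)-2)) * (((k-2).choose (2*s-1) : ℚ) * bernoulli ((k-2) - (2*s-1)))) := by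
    refine Finset.sum_congr rfl (fun s hs => ?_)
    rw [Finset.mem_Icc] at hs
    exact term_one k s hk hs.1 (by omega)
  rw [step, Finset.sum_add_distrib, ← Finset.mul_sum, ← Finset.mul_sum]
  rw [reindex_odd k (fun j => ((k-1).choose j : ℚ) * bernoulli ((k-1) - j)),
      reindex_odd k (fun j => ((k-2).choose j : ℚ) * bernoulli ((k-2) - j))]
  rw [refl_oddN (k-1) k (by omega) (by omega), refl_oddN (k-2) k (by omega) (by omega)]
  obtain ⟨t, rfl⟩ : ∃ t, k = t + 4 := ⟨k - 4, by omega⟩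
  rw [show t+4-1 = t+3 from by omega, show t+4-2 = t+2 from by omega,
      show t+3-1 = t+2 from by omega, show t+2-1 = t+1 from by omega]
  have h3 : ((t:ℚ)+4) - 1 ≠ 0 := by nlinarith [Nat.cast_nonneg (α := ℚ) t]
  have h2 : ((t:ℚ)+4) - 2 ≠ 0 := by nlinarith [Nat.cast_nonneg (α := ℚ) t]
  push_cast
  rw [pow_succ]
  field_simp
  ring

open Finset in
lemma inner_split (k s i : ℕ) :
    ∑ n ∈ range (k - 2*s + 1),
      (Nat.choose (i+1) (k - 2*s - n) : ℚ) * (Nat.choose (n + 2*s - 2) n : ℚ) * bernoulli n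
    = (∑ n ∈ range (k - 2*s + 1),
      (Nat.choose i (k - 2*s - n) : ℚ) * (Nat.choose (n + 2*s - 2) n : ℚ) * bernoulli n)
    + ∑ n ∈ range (k - 2*s),
      (Nat.choose i (k - 2*s - 1 - n) : ℚ) * (Nat.choose (n + 2*s - 2) n : ℚ) * bernoulli n := by
  rw [Finset.sum_range_succ, Finset.sum_range_succ (n := k - 2*s)]
  rw [Nat.sub_self, Nat.choose_zero_right, Nat.choose_zero_right]
  rw [add_right_comm]
  congr 1
  rw [← Finset.sum_add_distrib]
  refine Finset.sum_congr rfl (fun n hn => ?_)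
  rw [Finset.mem_range] at hn
  have h1 : k - 2*s - n = (k - 2*s - 1 - n) + 1 := by omega
  rw [h1, Nat.choose_succ_succ]
  push_cast
  ring

lemma Aterm_rec (k i : ℕ) : Aterm k (i+1) = Aterm k i + Aterm (k-1) i := by
  unfold Aterm
  have step : ∀ s ∈ Finset.Icc 1 (k/2),
      (-2 / (2 * (s : ℚ) - 1)) * ∑ n ∈ Finset.range (k - 2 * s + 1),
        (Nat.choose (i+1) (k - 2 * s - n) : ℚ) * (Nat.choose (n + 2 * s - 2) n : ℚ) * bernoulli n
    = ((-2 / (2 * (s : ℚ) - 1)) * ∑ n ∈ Finset.range (k - 2 * s + 1),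
        (Nat.choose i (k - 2 * s - n) : ℚ) * (Nat.choose (n + 2 * s - 2) n : ℚ) * bernoulli n)
      + ((-2 / (2 * (s : ℚ) - 1)) * ∑ n ∈ Finset.range (k - 2 * s),
        (Nat.choose i (k - 2 * s - 1 - n) : ℚ) * (Nat.choose (n + 2 * s - 2) n : ℚ) * bernoulli n) := by
    intro s _
    rw [inner_split, mul_add]
  rw [Finset.sum_congr rfl step, Finset.sum_add_distrib]
  congr 1
  -- ∑_{s ∈ Icc 1 (k/2)} (-2/..) * E s = Aterm (k-1) i form
  rw [show ∑ s ∈ Finset.Icc 1 ((k-1) / 2),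
    (-2 / (2 * (s : ℚ) - 1)) * ∑ n ∈ Finset.range (k - 1 - 2 * s + 1),
      (Nat.choose i (k - 1 - 2 * s - n) : ℚ) * (Nat.choose (n + 2 * s - 2) n : ℚ) * bernoulli n
    = ∑ s ∈ Finset.Icc 1 (k / 2),
    (-2 / (2 * (s : ℚ) - 1)) * ∑ n ∈ Finset.range (k - 2 * s),
      (Nat.choose i (k - 2 * s - 1 - n) : ℚ) * (Nat.choose (n + 2 * s - 2) n : ℚ) * bernoulli n
    from ?_]
  have hsub : Finset.Icc 1 ((k-1)/2) ⊆ Finset.Icc 1 (k/2) := by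
    intro x hx
    rw [Finset.mem_Icc] at *
    omega
  rw [← Finset.sum_subset hsub (fun x hx hnx => ?_)]
  · refine Finset.sum_congr rfl (fun s hs => ?_)
    rw [Finset.mem_Icc] at hs
    congr 1
    have hr : k - 1 - 2*s + 1 = k - 2*s := by omega
    rw [hr]
    refine Finset.sum_congr rfl (fun n hn => ?_)
    rw [show k - 1 - 2 * s - n = k - 2*s - 1 - n from by omega]
  · rw [Finset.mem_Icc] at hx hnx
    have : k - 2*x = 0 := by omega
    rw [this]
    simp

/-- **Vanishing of `A_k^{(i)}`.**
For every integer `k ≥ 4` and every integer `i` with `1 ≤ i ≤ k-3`, `A_k^{(i)} = 0`. -/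
theorem Aterm_eq_zero (k i : ℕ) (hk : 4 ≤ k) (hi1 : 1 ≤ i) (hi2 : i ≤ k - 3) :
    Aterm k i = 0 := by
  induction i, hi1 using Nat.le_induction generalizing k with
  | base => exact Aterm_one k hk
  | succ i hi ih =>
    rw [Aterm_rec k i, ih k hk (by omega), ih (k-1) (by omega) (by omega), add_zero]
end
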